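/- Let O_f be the order of conductor f in an imaginary quadratic field K with ring of integers O_K. If 𝔞 is an O_K-ideal with 𝔞 + fO_K = O_K, then 𝔞 ∩ O_f is an O_f-ideal prime to f, and N(𝔞 ∩ O_f) = N(𝔞). -/

import Mathlib

open NumberField

set_option maxHeartbeats 1000000 in
set_option synthInstance.maxHeartbeats 400000 in
/-- Let `O_f = ℤ + f·O_K` be the order of conductor `f` in an imaginary quadratic
field `K`.  If `𝔞` is an `O_K`-ideal with `𝔞 + f·O_K = O_K`, then `𝔞 ∩ O_f` is an
`O_f`-ideal prime to `f`, of the same norm. -/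
theorem stmt_13 (K : Type*) [Field K] [NumberField K]
    (h2 : Module.finrank ℚ K = 2) (him : IsEmpty (K →+* ℝ))
    (f : ℕ) (hf : 0 < f) (Of : Subring (𝓞 K))
    (hOf : ∀ x : 𝓞 K, x ∈ Of ↔ ∃ (m : ℤ) (y : 𝓞 K), x = m + f * y)
    (a : Ideal (𝓞 K)) (ha : a ⊔ Ideal.span {(f : 𝓞 K)} = ⊤) :
    Ideal.comap Of.subtype a ⊔ Ideal.span {(f : Of)} = ⊤ ∧
    Nat.card (Of ⧸ Ideal.comap Of.subtype a) = Nat.card (𝓞 K ⧸ a) := by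
  have hfmem : ∀ y : 𝓞 K, (f : 𝓞 K) * y ∈ Of := by
    intro y
    rw [hOf]
    exact ⟨0, y, by push_cast; ring⟩
  constructor
  · -- coprimality: use that a is coprime to f², and f²·O_K ⊆ f·Of
    have hcop : IsCoprime a (Ideal.span {(f : 𝓞 K)}) :=
      (Ideal.isCoprime_iff_sup_eq).mpr ha
    have hcop2 : IsCoprime a (Ideal.span {(f : 𝓞 K)} ^ 2) := hcop.pow_right
    rw [Ideal.isCoprime_iff_sup_eq, Ideal.span_singleton_pow] at hcop2
    have h1 : (1 : 𝓞 K) ∈ a ⊔ Ideal.span {(f : 𝓞 K) ^ 2} := hcop2 ▸ Submodule.mem_top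
    obtain ⟨x, hx, z, hz, hxz⟩ := Submodule.mem_sup.mp h1
    obtain ⟨w, hw⟩ := Ideal.mem_span_singleton'.mp hz
    subst hw
    have hxOf : x ∈ Of := by
      rw [hOf]
      refine ⟨1, -((f : 𝓞 K) * w), ?_⟩
      push_cast
      linear_combination hxz
    rw [Ideal.eq_top_iff_one]
    have hmem1 : (⟨x, hxOf⟩ : Of) ∈ Ideal.comap Of.subtype a := by
      simpa [Ideal.mem_comap] using hx
    have hmem2 : (⟨(f : 𝓞 K) * ((f : 𝓞 K) * w), hfmem _⟩ : Of) ∈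
        Ideal.span {(f : Of)} := by
      rw [Ideal.mem_span_singleton]
      exact ⟨⟨(f : 𝓞 K) * w, hfmem w⟩, by ext; push_cast; ring⟩
    have h1' : (1 : Of) = ⟨x, hxOf⟩ + ⟨(f : 𝓞 K) * ((f : 𝓞 K) * w), hfmem _⟩ := by
      refine Subtype.ext ?_
      show (1 : 𝓞 K) = x + (f : 𝓞 K) * ((f : 𝓞 K) * w)
      linear_combination (-1 : 𝓞 K) * hxz
    rw [h1']
    exact Submodule.add_mem_sup hmem1 hmem2
  · -- the inclusion induces an isomorphism of quotients
    have hsurj : Function.Surjective ((Ideal.Quotient.mk a).comp Of.subtype) := by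
      intro t
      obtain ⟨t₀, rfl⟩ := Ideal.Quotient.mk_surjective t
      have h1 : (1 : 𝓞 K) ∈ a ⊔ Ideal.span {(f : 𝓞 K)} := ha ▸ Submodule.mem_top
      obtain ⟨x, hx, z, hz, hxz⟩ := Submodule.mem_sup.mp h1
      obtain ⟨w, hw⟩ := Ideal.mem_span_singleton'.mp hz
      subst hw
      refine ⟨⟨(f : 𝓞 K) * (w * t₀), hfmem _⟩, ?_⟩
      have hdiff : (f : 𝓞 K) * (w * t₀) - t₀ ∈ a := by
        have heq : (f : 𝓞 K) * (w * t₀) - t₀ = -(t₀ * x) := by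
          linear_combination t₀ * hxz
        rw [heq]
        exact a.neg_mem (Ideal.mul_mem_left a t₀ hx)
      rw [RingHom.comp_apply]
      show Ideal.Quotient.mk a ((f : 𝓞 K) * (w * t₀)) = Ideal.Quotient.mk a t₀
      exact Ideal.Quotient.eq.mpr hdiff
    have hker : RingHom.ker ((Ideal.Quotient.mk a).comp Of.subtype)
        = Ideal.comap Of.subtype a := by
      ext x
      simp only [RingHom.mem_ker, RingHom.comp_apply, Subring.coe_subtype,
        Ideal.Quotient.eq_zero_iff_mem, Ideal.mem_comap]
    rw [← hker]
    exact Nat.card_congr (RingHom.quotientKerEquivOfSurjective hsurj).toEquiv
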